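/- Let Ω be a compact convex set, f⁺ an absolutely continuous measure on Ω, P the (a.e. well-defined) projection onto ∂Ω, and R(x) = 2P(x) − x. With u the signed distance to ∂Ω, one has ∫ u d(f⁺ − R#f⁺) = ∫ |x − R(x)| df⁺(x); consequently the plan (id, R)#f⁺ is an optimal transport plan between f⁺ and R#f⁺ for the cost |x−y|. -/

import Mathlib

open MeasureTheory Metric Set Classical

section Aux

variable {E : Type*} [NormedAddCommGroup E] [InnerProductSpace ℝ E]

/-- A segment from a point of a closed set to a point outside it meets the frontier. -/
lemma seg_meets_frontier {Ω : Set E} (hC : IsClosed Ω) {x y : E}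
    (hx : x ∈ Ω) (hy : y ∉ Ω) : ∃ z ∈ frontier Ω, z ∈ segment ℝ x y := by
  classical
  set f : ℝ → E := fun t => x + t • (y - x) with hf
  have hfc : Continuous f := by continuity
  set T : Set ℝ := {t | t ∈ Set.Icc (0:ℝ) 1 ∧ f t ∈ Ω} with hT
  have hTne : T.Nonempty := ⟨0, ⟨le_refl _, zero_le_one⟩, by simpa [hf] using hx⟩
  have hTbdd : BddAbove T := ⟨1, fun t ht => ht.1.2⟩
  have hTclosed : IsClosed T := by
    have : T = Set.Icc (0:ℝ) 1 ∩ f ⁻¹' Ω := rfl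
    rw [this]
    exact isClosed_Icc.inter (hC.preimage hfc)
  set t0 := sSup T with ht0
  have ht0T : t0 ∈ T := hTclosed.csSup_mem hTne hTbdd
  have ht0I : t0 ∈ Set.Icc (0:ℝ) 1 := ht0T.1
  have hne1 : t0 ≠ 1 := by
    intro h
    apply hy
    have := ht0T.2
    rw [h] at this
    simpa [hf] using this
  have ht0lt : t0 < 1 := lt_of_le_of_ne ht0I.2 hne1
  refine ⟨f t0, ?_, ?_⟩
  · rw [frontier_eq_closure_inter_closure, hC.closure_eq]
    refine ⟨ht0T.2, ?_⟩
    -- f t0 is a limit of points outside Ω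
    by_contra hcl
    -- then f t0 has a neighborhood inside Ω
    have hint : f t0 ∈ interior Ω := by
      rcases _root_.mem_closure_iff.not.mp hcl with h
      push_neg at h
      rcases h with ⟨o, ho, hto, hsub⟩
      rw [mem_interior]
      refine ⟨o, fun a ha => ?_, ho, hto⟩
      by_contra haΩ
      exact (Set.eq_empty_iff_forall_notMem.mp hsub) a ⟨ha, haΩ⟩
    have hpre : IsOpen (f ⁻¹' interior Ω) := isOpen_interior.preimage hfc
    rcases Metric.isOpen_iff.mp hpre t0 hint with ⟨δ, hδ, hball⟩
    set s := min 1 (t0 + δ/2) with hs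
    have hst0 : t0 < s := lt_min ht0lt (by linarith)
    have hsI : s ∈ Set.Icc (0:ℝ) 1 := ⟨le_trans ht0I.1 hst0.le, min_le_left _ _⟩
    have hsball : s ∈ Metric.ball t0 δ := by
      have : |s - t0| < δ := by
        rw [abs_of_nonneg (by linarith)]
        have : s ≤ t0 + δ/2 := min_le_right _ _
        linarith
      simpa [Real.dist_eq] using this
    have hsT : s ∈ T := ⟨hsI, interior_subset (hball hsball)⟩
    exact absurd (le_csSup hTbdd hsT) (not_le.mpr hst0)
  · rw [segment_eq_image']
    exact ⟨t0, ht0I, rfl⟩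

/-- The signed distance is 1-Lipschitz (pointwise form). -/
lemma signed_dist_lip {Ω : Set E} (hC : IsClosed Ω) (a b : E) :
    |(if a ∈ Ω then infDist a (frontier Ω) else -infDist a (frontier Ω)) -
      (if b ∈ Ω then infDist b (frontier Ω) else -infDist b (frontier Ω))| ≤ dist a b := by
  set F := frontier Ω with hF
  have hmix : ∀ p q : E, p ∈ Ω → q ∉ Ω → infDist p F + infDist q F ≤ dist p q := by
    intro p q hp hq
    rcases seg_meets_frontier hC hp hq with ⟨z, hzF, hzseg⟩
    have hsum : dist p z + dist z q = dist p q := dist_add_dist_of_mem_segment hzseg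
    have h1 : infDist p F ≤ dist p z := infDist_le_dist_of_mem hzF
    have h2 : infDist q F ≤ dist q z := infDist_le_dist_of_mem hzF
    rw [dist_comm q z] at h2
    linarith
  have habs : ∀ p q : E, |infDist p F - infDist q F| ≤ dist p q := by
    intro p q
    rw [abs_sub_le_iff]
    constructor
    · have := infDist_le_infDist_add_dist (x := p) (y := q) (s := F); linarith
    · have := infDist_le_infDist_add_dist (x := q) (y := p) (s := F)
      rw [dist_comm q p] at this; linarith
  by_cases ha : a ∈ Ω <;> by_cases hb : b ∈ Ω <;> simp only [ha, hb, if_true, if_false]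
  · exact habs a b
  · have := hmix a b ha hb
    have h1 : (0:ℝ) ≤ infDist a F := infDist_nonneg
    have h2 : (0:ℝ) ≤ infDist b F := infDist_nonneg
    rw [sub_neg_eq_add, abs_of_nonneg (by linarith)]
    linarith
  · have := hmix b a hb ha
    have h1 : (0:ℝ) ≤ infDist a F := infDist_nonneg
    have h2 : (0:ℝ) ≤ infDist b F := infDist_nonneg
    rw [dist_comm b a] at this
    have : -infDist a F - infDist b F ≥ -dist a b := by linarith
    rw [abs_le]
    constructor
    · linarith
    · linarith
  · have := habs a b
    calc |(-infDist a F) - (-infDist b F)| = |infDist b F - infDist a F| := by ring_nf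
      _ ≤ dist b a := habs b a
      _ = dist a b := dist_comm b a

/-- Variational inequality for a nearest point in a convex set. -/
lemma proj_inner_le {Ω : Set E} (hconv : Convex ℝ Ω) {q y : E} (hq : q ∈ Ω)
    (hmin : ∀ w ∈ Ω, dist y q ≤ dist y w) {w : E} (hw : w ∈ Ω) :
    inner ℝ (y - q) (w - q) ≤ (0:ℝ) := by
  set c : ℝ := inner ℝ (y - q) (w - q) with hc
  by_contra hpos
  push_neg at hpos
  set s : ℝ := ‖w - q‖^2 with hs
  have hs0 : 0 ≤ s := sq_nonneg _
  have key : ∀ t : ℝ, 0 < t → t ≤ 1 → 2 * t * c ≤ t^2 * s := by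
    intro t ht0 ht1
    have hwt : q + t • (w - q) ∈ Ω := by
      have : q + t • (w - q) = (1 - t) • q + t • w := by
        rw [smul_sub]; module
      rw [this]
      exact hconv hq hw (by linarith) (le_of_lt ht0) (by ring)
    have hd := hmin _ hwt
    have hexp : ‖y - (q + t • (w - q))‖^2 = ‖y - q‖^2 - 2 * t * c + t^2 * s := by
      have h1 : y - (q + t • (w - q)) = (y - q) - t • (w - q) := by abel
      rw [h1, norm_sub_sq_real, real_inner_smul_right, norm_smul]
      rw [Real.norm_eq_abs, abs_of_pos ht0]
      ring
    have hd2 : ‖y - q‖^2 ≤ ‖y - (q + t • (w - q))‖^2 := by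
      have h0 : dist y q = ‖y - q‖ := dist_eq_norm _ _
      have h1 : dist y (q + t • (w - q)) = ‖y - (q + t • (w - q))‖ := dist_eq_norm _ _
      rw [h0, h1] at hd
      exact pow_le_pow_left₀ (norm_nonneg _) hd 2
    linarith [hexp ▸ hd2]
  rcases lt_or_ge s (c) with hcs | hcs
  · -- s < c : take t = 1
    have := key 1 one_pos le_rfl
    nlinarith
  · -- c ≤ s, take t = c / s ; note s > 0 since c > 0 ≤ s ... if s = 0 then c ≤ 0
    have hs0' : 0 < s := lt_of_lt_of_le hpos hcs
    have := key (c / s) (div_pos hpos hs0') (by rw [div_le_one hs0']; exact hcs)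
    have h2 : (c/s)^2 * s = c^2 / s := by field_simp
    rw [h2] at this
    have h3 : 2 * (c/s) * c = 2 * (c^2 / s) := by field_simp
    have h4 : 0 < c^2 / s := div_pos (by positivity) hs0'
    linarith [h3 ▸ this]

end Aux

section Geom

variable {E : Type*} [NormedAddCommGroup E] [InnerProductSpace ℝ E]

set_option maxHeartbeats 1000000 in
/-- Supporting-hyperplane inequality at a nearest frontier point. -/
lemma geom_support {Ω : Set E} (hΩc : IsCompact Ω) (hΩconv : Convex ℝ Ω)
    {x p : E} (hx : x ∈ Ω) (hp : p ∈ frontier Ω)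
    (hdp : dist x p = infDist x (frontier Ω)) {z : E} (hz : z ∈ Ω) :
    (0:ℝ) ≤ inner ℝ (x - p) (z - p) := by
  classical
  have hclosed : IsClosed Ω := hΩc.isClosed
  set F := frontier Ω with hF
  set r := dist x p with hr
  clear_value r
  rcases eq_or_lt_of_le (hr ▸ dist_nonneg : (0:ℝ) ≤ r) with hr0 | hrpos
  · have hxp : x = p := by
      apply dist_eq_zero.mp
      rw [← hr]; exact hr0.symm
    rw [hxp, sub_self, inner_zero_left]
  -- the open ball of radius r is inside Ω
  have hball : Metric.ball x r ⊆ Ω := by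
    intro w hw
    by_contra hwΩ
    rcases seg_meets_frontier hclosed hx hwΩ with ⟨ζ, hζF, hζseg⟩
    have hsum : dist x ζ + dist ζ w = dist x w := dist_add_dist_of_mem_segment hζseg
    have h1 : r ≤ dist x ζ := by
      rw [hdp]; exact infDist_le_dist_of_mem hζF
    have h2 : dist x w < r := by rwa [Metric.mem_ball, dist_comm] at hw
    have := dist_nonneg (x := ζ) (y := w)
    linarith
  have hcball : Metric.closedBall x r ⊆ Ω := by
    rw [← closure_ball x (ne_of_gt hrpos)]
    exact hclosed.closure_subset_iff.mpr hball
  have hpΩ : p ∈ Ω := by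
    rw [← hclosed.closure_eq]; exact hp.1
  set c : ℝ := inner ℝ (x - p) (z - p) with hc
  clear_value c
  set b : ℝ := ‖z - p‖ with hb
  clear_value b
  have hb0 : 0 ≤ b := hb ▸ norm_nonneg _
  by_contra hneg
  push_neg at hneg
  set η : ℝ := -c with hη
  clear_value η
  have hη0 : 0 < η := by simpa [hη] using hneg
  -- choose ε
  set ε : ℝ := min (η / (8*r)) (η^2 / (32*r*(b^2+1))) with hε
  have hε0 : 0 < ε := by
    apply lt_min
    · positivity
    · positivity
  have hε1 : ε ≤ η / (8*r) := min_le_left _ _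
  have hε2 : ε ≤ η^2 / (32*r*(b^2+1)) := min_le_right _ _
  clear_value ε
  -- find y outside Ω close to p
  have hpcl : p ∈ closure Ωᶜ := by
    rw [closure_compl]; exact hp.2
  rcases Metric.mem_closure_iff.mp hpcl ε hε0 with ⟨y, hyΩc, hpy⟩
  have hyΩ : y ∉ Ω := hyΩc
  -- nearest point q of Ω to y
  rcases hΩc.exists_infDist_eq_dist ⟨x, hx⟩ y with ⟨q, hqΩ, hqd⟩
  have hmin : ∀ w ∈ Ω, dist y q ≤ dist y w := by
    intro w hw
    rw [← hqd]; exact infDist_le_dist_of_mem hw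
  have hyq : y ≠ q := fun h => hyΩ (h ▸ hqΩ)
  set m : ℝ := ‖y - q‖ with hm
  clear_value m
  have hm0 : 0 < m := by
    rw [hm, norm_pos_iff, sub_ne_zero]; exact hyq
  set n : E := m⁻¹ • (y - q) with hn
  clear_value n
  have hnnorm : ‖n‖ = 1 := by
    rw [hn, norm_smul, norm_inv, Real.norm_eq_abs, abs_of_pos hm0, ← hm, inv_mul_cancel₀ (ne_of_gt hm0)]
  have hinner_n : ∀ w ∈ Ω, inner ℝ n (w - q) ≤ (0:ℝ) := by
    intro w hw
    have h0 := proj_inner_le hΩconv hqΩ hmin hw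
    have : (inner ℝ n (w - q) : ℝ) = m⁻¹ * inner ℝ (y - q) (w - q) := by
      rw [hn, real_inner_smul_left]
    rw [this]
    exact mul_nonpos_of_nonneg_of_nonpos (le_of_lt (inv_pos.mpr hm0)) h0
  -- δ bound
  set δ : ℝ := dist q p with hδ
  clear_value δ
  have hδ0 : 0 ≤ δ := hδ ▸ dist_nonneg
  have hδlt : δ < 2 * ε := by
    have h1 : dist q y ≤ dist y p := by
      rw [dist_comm q y, ← hqd]
      exact infDist_le_dist_of_mem hpΩ
    have h2 : δ ≤ dist q y + dist y p := hδ ▸ dist_triangle q y p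
    have h3 : dist y p < ε := by rwa [dist_comm] at hpy
    linarith
  -- w₁ := x + r • n ∈ Ω
  have hw1 : x + r • n ∈ Ω := by
    apply hcball
    rw [Metric.mem_closedBall, dist_eq_norm]
    have : x + r • n - x = r • n := by abel
    rw [this, norm_smul, Real.norm_eq_abs, abs_of_pos hrpos, hnnorm, mul_one]
  have hnx : (inner ℝ n (x - q) : ℝ) ≤ -r := by
    have h0 := hinner_n _ hw1
    have h1 : x + r • n - q = (x - q) + r • n := by abel
    rw [h1, inner_add_right, real_inner_smul_right, real_inner_self_eq_norm_sq, hnnorm] at h0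
    have : (inner ℝ n (x - q) : ℝ) + r ≤ 0 := by
      simpa using h0
    linarith
  have hqp : ‖q - p‖ = δ := by rw [hδ, dist_eq_norm]
  have hnxp : (inner ℝ n (x - p) : ℝ) ≤ -r + δ := by
    have h1 : x - p = (x - q) + (q - p) := by abel
    rw [h1, inner_add_right]
    have h2 : (inner ℝ n (q - p) : ℝ) ≤ δ := by
      calc (inner ℝ n (q - p) : ℝ) ≤ ‖n‖ * ‖q - p‖ := real_inner_le_norm _ _
        _ = δ := by rw [hnnorm, one_mul, hqp]
    linarith
  -- a := ‖(x - p) + r • n‖, a² ≤ 2 r δ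
  set a : ℝ := ‖(x - p) + r • n‖ with ha
  clear_value a
  have ha0 : 0 ≤ a := ha ▸ norm_nonneg _
  have hasq : a^2 ≤ 2 * r * δ := by
    rw [ha, norm_add_sq_real, real_inner_smul_right, norm_smul, Real.norm_eq_abs,
      abs_of_pos hrpos, hnnorm, mul_one]
    have hxp : ‖x - p‖ = r := by rw [hr, dist_eq_norm]
    have hcomm : (inner ℝ (x - p) n : ℝ) = inner ℝ n (x - p) := real_inner_comm _ _
    rw [hxp, hcomm]
    nlinarith [hnxp, hrpos]
  -- inner ℝ n (z - p) ≤ δ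
  have hnzp : (inner ℝ n (z - p) : ℝ) ≤ δ := by
    have h1 : z - p = (z - q) + (q - p) := by abel
    rw [h1, inner_add_right]
    have h2 := hinner_n z hz
    have h3 : (inner ℝ n (q - p) : ℝ) ≤ δ := by
      calc (inner ℝ n (q - p) : ℝ) ≤ ‖n‖ * ‖q - p‖ := real_inner_le_norm _ _
        _ = δ := by rw [hnnorm, one_mul, hqp]
    linarith
  -- final estimate
  have hsplit : c = inner ℝ ((x - p) + r • n) (z - p) - r * inner ℝ n (z - p) := by
    rw [inner_add_left, real_inner_smul_left, hc]; ring
  have hCS : -(a * b) ≤ (inner ℝ ((x - p) + r • n) (z - p) : ℝ) := by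
    have := abs_real_inner_le_norm ((x - p) + r • n) (z - p)
    rw [← ha, ← hb] at this
    have h1 := neg_abs_le (inner ℝ ((x - p) + r • n) (z - p) : ℝ)
    linarith [abs_le.mp this]
  have hclb : -(a*b) - r * δ ≤ c := by
    rw [hsplit]
    have : r * (inner ℝ n (z - p) : ℝ) ≤ r * δ := by
      exact mul_le_mul_of_nonneg_left hnzp (le_of_lt hrpos)
    linarith
  -- bounds from ε
  clear hinner_n hmin hp hdp hpcl hF
  clear F
  have hP1 : 8*r*ε ≤ η := by
    have := (le_div_iff₀ (by positivity : (0:ℝ) < 8*r)).mp hε1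
    linarith
  have hP2 : 32*r*(b^2+1)*ε ≤ η^2 := by
    have := (le_div_iff₀ (by positivity : (0:ℝ) < 32*r*(b^2+1))).mp hε2
    linarith
  have hrε0 : (0:ℝ) ≤ r*ε := by positivity
  have hrδ : r * δ ≤ η / 4 := by nlinarith [hδlt, hrpos, hP1]
  have hab : a * b ≤ η / 2 := by
    have ha2 : a^2 ≤ 4*(r*ε) := by nlinarith [hasq, hδlt, hrpos]
    have hb2 : a^2*b^2 ≤ 4*(r*ε)*b^2 := by nlinarith [sq_nonneg b]
    have hb3 : 32*(r*ε)*b^2 ≤ η^2 := by nlinarith [hrε0, hP2]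
    have habsq : (a*b)^2 ≤ (η/2)^2 := by nlinarith [hb2, hb3]
    have hab0 : 0 ≤ a * b := mul_nonneg ha0 hb0
    nlinarith [habsq, hab0]
  -- contradiction : c = -η but c ≥ -(ab) - rδ ≥ -3η/4
  have : -η ≥ c := by rw [hη]; linarith [le_refl c]
  linarith [hclb, hab, hrδ, hη0]

end Geom

section Refl

variable {E : Type*} [NormedAddCommGroup E] [InnerProductSpace ℝ E]

lemma refl_facts {Ω : Set E} (hΩc : IsCompact Ω) (hΩconv : Convex ℝ Ω)
    {x p : E} (hx : x ∈ Ω) (hp : p ∈ frontier Ω)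
    (hdp : dist x p = infDist x (frontier Ω)) :
    (if ((2:ℝ) • p - x) ∈ Ω then infDist ((2:ℝ) • p - x) (frontier Ω)
      else -infDist ((2:ℝ) • p - x) (frontier Ω)) = - dist x p ∧
    dist x ((2:ℝ) • p - x) = 2 * dist x p := by
  have hclosed : IsClosed Ω := hΩc.isClosed
  set w := (2:ℝ) • p - x with hw
  have hxw : x - w = (2:ℝ) • (x - p) := by rw [hw]; module
  have hdxw : dist x w = 2 * dist x p := by
    rw [dist_eq_norm, hxw, norm_smul, Real.norm_eq_abs, dist_eq_norm]
    norm_num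
  refine ⟨?_, hdxw⟩
  have hwp : w - p = p - x := by rw [hw]; module
  rcases eq_or_lt_of_le (dist_nonneg : (0:ℝ) ≤ dist x p) with h0 | hpos
  · -- x = p, w = x
    have hxp : x = p := dist_eq_zero.mp h0.symm
    have hwx : w = x := by rw [hw, hxp]; module
    rw [hwx, if_pos hx, ← hdp, ← h0]
    norm_num
  · -- w ∉ Ω
    have hwnot : w ∉ Ω := by
      intro hwΩ
      have := geom_support hΩc hΩconv hx hp hdp hwΩ
      rw [hwp] at this
      have h2 : (inner ℝ (x - p) (p - x) : ℝ) = -‖x - p‖^2 := by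
        have : p - x = -(x - p) := by abel
        rw [this, inner_neg_right, real_inner_self_eq_norm_sq]
      rw [h2] at this
      have h3 : ‖x - p‖ = dist x p := (dist_eq_norm x p).symm
      nlinarith [hpos, h3]
    rw [if_neg hwnot, neg_inj]
    -- infDist w F = dist x p
    have hFne : (frontier Ω).Nonempty := ⟨p, hp⟩
    have hle : infDist w (frontier Ω) ≤ dist x p := by
      have : dist w p = dist x p := by
        rw [dist_eq_norm, hwp, ← dist_eq_norm, dist_comm]
      rw [← this]
      exact infDist_le_dist_of_mem hp
    have hge : dist x p ≤ infDist w (frontier Ω) := by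
      by_contra hlt
      push_neg at hlt
      rcases (infDist_lt_iff hFne).mp hlt with ⟨z, hzF, hzd⟩
      have hzΩ : z ∈ Ω := by
        rw [← hclosed.closure_eq]; exact hzF.1
      have hgeom := geom_support hΩc hΩconv hx hp hdp hzΩ
      have hsq : dist x p ^ 2 ≤ dist w z ^ 2 := by
        have hwz : w - z = (p - x) + (p - z) := by rw [hw]; module
        rw [dist_eq_norm w z, dist_eq_norm x p, hwz, norm_add_sq_real]
        have hin : (inner ℝ (p - x) (p - z) : ℝ) = inner ℝ (x - p) (z - p) := by
          have h1 : p - x = -(x - p) := by abel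
          have h2 : p - z = -(z - p) := by abel
          rw [h1, h2, inner_neg_neg]
        rw [hin]
        rw [norm_sub_rev p x]
        nlinarith [sq_nonneg ‖p - z‖, hgeom]
      have hd0 : (0:ℝ) ≤ dist w z := dist_nonneg
      nlinarith [hzd, hsq, dist_nonneg (x := x) (y := p)]
    linarith

end Refl


set_option maxHeartbeats 1000000 in
/-- For `Ω` compact convex, `f⁺ ≪ Leb` supported in `Ω`, `P` the a.e. projection onto `∂Ω`,
`R x = 2 P x - x`, and `u` the signed distance to `∂Ω`:
`∫ u d(f⁺ - R#f⁺) = ∫ |x - R x| df⁺`, and consequently the plan `(id,R)#f⁺` is optimal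
between `f⁺` and `R#f⁺` for the cost `|x - y|`. -/
theorem reflection_plan_optimal {d : ℕ}
    (Ω : Set (EuclideanSpace ℝ (Fin d))) (hΩc : IsCompact Ω) (hΩconv : Convex ℝ Ω)
    (fp : Measure (EuclideanSpace ℝ (Fin d))) [IsFiniteMeasure fp]
    (habs : fp ≪ volume) (hsupp : fp Ωᶜ = 0)
    (P : EuclideanSpace ℝ (Fin d) → EuclideanSpace ℝ (Fin d)) (hPmeas : Measurable P)
    (hP : ∀ᵐ x ∂fp, P x ∈ frontier Ω ∧ dist x (P x) = Metric.infDist x (frontier Ω))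
    (R : EuclideanSpace ℝ (Fin d) → EuclideanSpace ℝ (Fin d))
    (hR : ∀ x, R x = (2 : ℝ) • P x - x)
    (u : EuclideanSpace ℝ (Fin d) → ℝ)
    (hu : u = fun x => if x ∈ Ω then Metric.infDist x (frontier Ω)
      else -Metric.infDist x (frontier Ω)) :
    (∫ x, u x ∂fp - ∫ y, u y ∂(fp.map R) = ∫ x, dist x (R x) ∂fp) ∧
    (∀ γ' : Measure (EuclideanSpace ℝ (Fin d) × EuclideanSpace ℝ (Fin d)),
        γ'.map Prod.fst = fp → γ'.map Prod.snd = fp.map R →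
        ∫ p, dist p.1 p.2 ∂(fp.map fun x => (x, R x)) ≤ ∫ p, dist p.1 p.2 ∂γ') := by
  classical
  have hΩmeas : MeasurableSet Ω := hΩc.isClosed.measurableSet
  have hRmeas : Measurable R := by
    have hfun : R = fun x => (2:ℝ) • P x - x := funext hR
    rw [hfun]
    exact (hPmeas.const_smul (2:ℝ)).sub measurable_id
  have hUmeas : Measurable u := by
    rw [hu]
    exact Measurable.ite hΩmeas (continuous_infDist_pt (frontier Ω)).measurable
      (continuous_infDist_pt (frontier Ω)).measurable.neg
  set C := Metric.diam Ω with hC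
  -- a.e. facts
  have hin : ∀ᵐ x ∂fp, x ∈ Ω := by
    rw [ae_iff]
    exact hsupp
  have hkey : ∀ᵐ x ∂fp, u x = dist x (P x) ∧ u (R x) = -dist x (P x) ∧
      dist x (R x) = 2 * dist x (P x) ∧ dist x (P x) ≤ C := by
    filter_upwards [hin, hP] with x hxΩ ⟨hPF, hPd⟩
    have hPΩ : P x ∈ Ω := by
      rw [← hΩc.isClosed.closure_eq]; exact hPF.1
    have hfacts := refl_facts hΩc hΩconv hxΩ hPF hPd
    refine ⟨?_, ?_, ?_, ?_⟩
    · rw [hu]; simp only [hxΩ, if_true]; exact hPd.symm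
    · rw [hu, hR x]
      exact hfacts.1
    · rw [hR x]; exact hfacts.2
    · exact Metric.dist_le_diam_of_mem hΩc.isBounded hxΩ hPΩ
  have hCnn : 0 ≤ C := Metric.diam_nonneg
  -- integrability over fp
  have hUint : Integrable u fp := by
    refine Integrable.mono' (integrable_const C) hUmeas.aestronglyMeasurable ?_
    filter_upwards [hkey] with x ⟨h1, _, _, h4⟩
    rw [Real.norm_eq_abs, h1, abs_of_nonneg dist_nonneg]; exact h4
  have hURint : Integrable (fun x => u (R x)) fp := by
    refine Integrable.mono' (integrable_const C) (hUmeas.comp hRmeas).aestronglyMeasurable ?_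
    filter_upwards [hkey] with x ⟨_, h2, _, h4⟩
    rw [Real.norm_eq_abs, h2, abs_neg, abs_of_nonneg dist_nonneg]; exact h4
  have hmapeq : ∫ y, u y ∂(fp.map R) = ∫ x, u (R x) ∂fp :=
    integral_map hRmeas.aemeasurable hUmeas.aestronglyMeasurable
  have part1 : ∫ x, u x ∂fp - ∫ y, u y ∂(fp.map R) = ∫ x, dist x (R x) ∂fp := by
    rw [hmapeq, ← integral_sub hUint hURint]
    apply integral_congr_ae
    filter_upwards [hkey] with x ⟨h1, h2, h3, _⟩
    rw [h1, h2, h3]; ring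
  refine ⟨part1, ?_⟩
  intro γ' h1 h2
  haveI hγfin : IsFiniteMeasure γ' := by
    constructor
    have : γ' Set.univ = (γ'.map Prod.fst) Set.univ := by
      rw [Measure.map_apply measurable_fst MeasurableSet.univ, Set.preimage_univ]
    rw [this, h1]
    exact measure_lt_top fp _
  -- transfer a.e. bounds to γ'
  have htrans1 : ∀ (S : Set (EuclideanSpace ℝ (Fin d))), MeasurableSet S → fp Sᶜ = 0 →
      ∀ᵐ p ∂γ', p.1 ∈ S := by
    intro S hS hS0
    rw [ae_iff]
    have : {p : EuclideanSpace ℝ (Fin d) × EuclideanSpace ℝ (Fin d) | ¬ p.1 ∈ S} =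
        Prod.fst ⁻¹' Sᶜ := rfl
    rw [this, ← Measure.map_apply measurable_fst hS.compl, h1, hS0]
  have htrans2 : ∀ (S : Set (EuclideanSpace ℝ (Fin d))), MeasurableSet S → (fp.map R) Sᶜ = 0 →
      ∀ᵐ p ∂γ', p.2 ∈ S := by
    intro S hS hS0
    rw [ae_iff]
    have : {p : EuclideanSpace ℝ (Fin d) × EuclideanSpace ℝ (Fin d) | ¬ p.2 ∈ S} =
        Prod.snd ⁻¹' Sᶜ := rfl
    rw [this, ← Measure.map_apply measurable_snd hS.compl, h2, hS0]
  -- |u| ≤ C a.e. for both marginals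
  set S : Set (EuclideanSpace ℝ (Fin d)) := {x | |u x| ≤ C} with hSdef
  have hSmeas : MeasurableSet S := by
    apply measurableSet_le (hUmeas.abs) measurable_const
  have haeS : ∀ᵐ x ∂fp, x ∈ S := by
    filter_upwards [hkey] with x ⟨h1, _, _, h4⟩
    show |u x| ≤ C
    rw [h1, abs_of_nonneg dist_nonneg]; exact h4
  have haeRS : ∀ᵐ x ∂fp, R x ∈ S := by
    filter_upwards [hkey] with x ⟨_, h2, _, h4⟩
    show |u (R x)| ≤ C
    rw [h2, abs_neg, abs_of_nonneg dist_nonneg]; exact h4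
  have hfpS : fp Sᶜ = 0 := ae_iff.mp haeS
  have hmapS : (fp.map R) Sᶜ = 0 := by
    rw [Measure.map_apply hRmeas hSmeas.compl]
    exact ae_iff.mp haeRS
  have hγ1 : ∀ᵐ p ∂γ', |u p.1| ≤ C := htrans1 S hSmeas hfpS
  have hγ2 : ∀ᵐ p ∂γ', |u p.2| ≤ C := htrans2 S hSmeas hmapS
  -- boundedness of points for the cost integrability
  obtain ⟨M, hM⟩ : ∃ M : ℝ, Ω ⊆ Metric.closedBall 0 M := by
    rcases hΩc.isBounded.subset_closedBall 0 with ⟨M, hM⟩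
    exact ⟨M, hM⟩
  set T : Set (EuclideanSpace ℝ (Fin d)) := Metric.closedBall 0 (3*M + 3) with hTdef
  have hTmeas : MeasurableSet T := measurableSet_closedBall
  have haeT : ∀ᵐ x ∂fp, R x ∈ T := by
    filter_upwards [hin, hP] with x hxΩ ⟨hPF, _⟩
    have hPΩ : P x ∈ Ω := by
      rw [← hΩc.isClosed.closure_eq]; exact hPF.1
    have hx' : ‖x‖ ≤ M := by simpa [dist_zero_right] using hM hxΩ
    have hP' : ‖P x‖ ≤ M := by simpa [dist_zero_right] using hM hPΩ
    have hM0 : 0 ≤ M := le_trans (norm_nonneg x) hx'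
    show R x ∈ Metric.closedBall 0 (3*M + 3)
    rw [Metric.mem_closedBall, dist_zero_right, hR x]
    calc ‖(2:ℝ) • P x - x‖ ≤ ‖(2:ℝ) • P x‖ + ‖x‖ := norm_sub_le _ _
      _ = 2 * ‖P x‖ + ‖x‖ := by rw [norm_smul]; norm_num
      _ ≤ 3*M + 3 := by linarith
  have hΩT : fp Tᶜ = 0 := by
    have : ∀ᵐ x ∂fp, x ∈ T := by
      filter_upwards [hin] with x hxΩ
      have hx' : ‖x‖ ≤ M := by simpa [dist_zero_right] using hM hxΩ
      have hM0 : 0 ≤ M := le_trans (norm_nonneg x) hx'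
      show x ∈ Metric.closedBall 0 (3*M + 3)
      rw [Metric.mem_closedBall, dist_zero_right]
      linarith
    exact ae_iff.mp this
  have hmapT : (fp.map R) Tᶜ = 0 := by
    rw [Measure.map_apply hRmeas hTmeas.compl]
    exact ae_iff.mp haeT
  have hγT1 : ∀ᵐ p ∂γ', p.1 ∈ T := htrans1 T hTmeas hΩT
  have hγT2 : ∀ᵐ p ∂γ', p.2 ∈ T := htrans2 T hTmeas hmapT
  -- integrability over γ'
  have hdistmeas : Measurable (fun p : EuclideanSpace ℝ (Fin d) × EuclideanSpace ℝ (Fin d) =>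
      dist p.1 p.2) := (continuous_fst.dist continuous_snd).measurable
  have hγdist : Integrable (fun p : EuclideanSpace ℝ (Fin d) × EuclideanSpace ℝ (Fin d) =>
      dist p.1 p.2) γ' := by
    refine Integrable.mono' (integrable_const (2*(3*M+3))) hdistmeas.aestronglyMeasurable ?_
    filter_upwards [hγT1, hγT2] with p hp1 hp2
    rw [Real.norm_eq_abs, abs_of_nonneg dist_nonneg]
    have h1 : dist p.1 0 ≤ 3*M+3 := hp1
    have h2 : dist p.2 0 ≤ 3*M+3 := hp2
    calc dist p.1 p.2 ≤ dist p.1 0 + dist 0 p.2 := dist_triangle _ _ _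
      _ = dist p.1 0 + dist p.2 0 := by rw [dist_comm 0 p.2]
      _ ≤ 2*(3*M+3) := by linarith
  have hint1 : Integrable (fun p : EuclideanSpace ℝ (Fin d) × EuclideanSpace ℝ (Fin d) =>
      u p.1) γ' := by
    refine Integrable.mono' (integrable_const C)
      ((hUmeas.comp measurable_fst).aestronglyMeasurable) ?_
    filter_upwards [hγ1] with p hp
    rwa [Real.norm_eq_abs]
  have hint2 : Integrable (fun p : EuclideanSpace ℝ (Fin d) × EuclideanSpace ℝ (Fin d) =>
      u p.2) γ' := by
    refine Integrable.mono' (integrable_const C)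
      ((hUmeas.comp measurable_snd).aestronglyMeasurable) ?_
    filter_upwards [hγ2] with p hp
    rwa [Real.norm_eq_abs]
  -- the chain of equalities
  have e1 : ∫ p, dist p.1 p.2 ∂(fp.map fun x => (x, R x)) = ∫ x, dist x (R x) ∂fp :=
    integral_map (measurable_id.prodMk hRmeas).aemeasurable hdistmeas.aestronglyMeasurable
  have e2 : ∫ p, u p.1 ∂γ' = ∫ x, u x ∂fp := by
    have : ∫ x, u x ∂(γ'.map Prod.fst) = ∫ p, u p.1 ∂γ' :=
      integral_map measurable_fst.aemeasurable hUmeas.aestronglyMeasurable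
    rw [h1] at this
    exact this.symm
  have e3 : ∫ p, u p.2 ∂γ' = ∫ y, u y ∂(fp.map R) := by
    have : ∫ y, u y ∂(γ'.map Prod.snd) = ∫ p, u p.2 ∂γ' :=
      integral_map measurable_snd.aemeasurable hUmeas.aestronglyMeasurable
    rw [h2] at this
    exact this.symm
  have e4 : ∫ p, (u p.1 - u p.2) ∂γ' = ∫ x, u x ∂fp - ∫ y, u y ∂(fp.map R) := by
    rw [integral_sub hint1 hint2, e2, e3]
  have lip : ∀ p : EuclideanSpace ℝ (Fin d) × EuclideanSpace ℝ (Fin d),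
      u p.1 - u p.2 ≤ dist p.1 p.2 := by
    intro p
    have h := signed_dist_lip hΩc.isClosed p.1 p.2
    rw [hu]
    have h2 := (abs_le.mp h).2
    exact le_trans (sub_le_iff_le_add.mpr (sub_le_iff_le_add.mp h2)) le_rfl
  calc ∫ p, dist p.1 p.2 ∂(fp.map fun x => (x, R x)) = ∫ x, dist x (R x) ∂fp := e1
    _ = ∫ x, u x ∂fp - ∫ y, u y ∂(fp.map R) := part1.symm
    _ = ∫ p, (u p.1 - u p.2) ∂γ' := e4.symm
    _ ≤ ∫ p, dist p.1 p.2 ∂γ' := by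
        apply integral_mono_ae (hint1.sub hint2) hγdist
        filter_upwards with p
        exact lip p
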